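/- Fix a positive integer n. For all integers ℓ with 2 ≤ ℓ ≤ n, all integers T, all a ∈ ℤ_n, and all b, α ∈ {1,2,3,4}, the set W_n(ℓ,T,a,b,α) is the disjoint union over i = 1,2,3,4 of the sets W_n(ℓ−1, T−c_i, a − 𝟙[α ≥ i]·(ℓ−1) mod n, (b−α) mod* 4, i) ∘ α, where c_i = (α − i) mod* 4, 𝟙[α ≥ i] equals 1 if α ≥ i and 0 otherwise, and C ∘ α denotes the set of words of C with the symbol α appended. -/

import Mathlib

/-- A list of integers is quaternary if all entries lie in {1,2,3,4}. -/
def IsQ (x : List ℤ) : Prop := ∀ a ∈ x, 1 ≤ a ∧ a ≤ 4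

/-- The alternating quaternary supersequence 1,2,3,4,1,2,3,4,... of length `T`. -/
def altSeq (T : ℕ) : List ℤ := (List.range T).map (fun i => ((i % 4 : ℕ) : ℤ) + 1)

/-- The synthesis time of `x`: the least `T` such that `x` is a subsequence of `altSeq T`. -/
noncomputable def synTime (x : List ℤ) : ℕ := sInf {T : ℕ | x.Sublist (altSeq T)}

/-- The shifted modulo: the unique element of {1,2,3,4} congruent to `a` mod 4. -/
def mods4 (a : ℤ) : ℤ := (a - 1) % 4 + 1

/-- The differential word of `x`. -/
def diffWord (x : List ℤ) : List ℤ := List.zipWith (fun p c => mods4 (c - p)) (0 :: x) x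

/-- The set of quaternary words of length `n` with synthesis time at most `T`. -/
def W (n : ℕ) (T : ℤ) : Set (List ℤ) :=
  {x | x.length = n ∧ IsQ x ∧ (synTime x : ℤ) ≤ T}

/-- `A n T` is the number of quaternary words of length `n` with synthesis time at most `T`. -/
noncomputable def A (n : ℕ) (T : ℤ) : ℕ := (W n T).ncard

/-- The single-indel ball of `x`. -/
def ball (x : List ℤ) : Set (List ℤ) :=
  {y | y = x ∨ (y.length + 1 = x.length ∧ y.Sublist x) ∨
       (x.length + 1 = y.length ∧ IsQ y ∧ x.Sublist y)}

/-- The auxiliary binary sequence of `x` (as 0/1 naturals). -/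
def auxSeq (x : List ℤ) : List ℕ :=
  List.zipWith (fun a b => if a ≤ b then 1 else 0) x x.tail

/-- VT syndrome of a binary word: `∑ i·w_i` with positions starting from 1. -/
def vtSyn (w : List ℕ) : ℕ := ∑ i ∈ Finset.range w.length, (i + 1) * w.getD i 0

/-- The quaternary VT code. -/
def VTn (n : ℕ) (a : ZMod n) (b : ZMod 4) : Set (List ℤ) :=
  {x | x.length = n ∧ IsQ x ∧ ((vtSyn (auxSeq x) : ℕ) : ZMod n) = a ∧
       ((x.sum : ℤ) : ZMod 4) = b}

/-- The quaternary VT code with synthesis time constraint. -/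
def VTnT (n : ℕ) (a : ZMod n) (b : ZMod 4) (T : ℤ) : Set (List ℤ) :=
  {x ∈ VTn n a b | (synTime x : ℤ) ≤ T}

/-- The set `W_n(ℓ,T,a,b,α)` of quaternary words of length `ℓ` ending in `α`,
with synthesis time at most `T`, VT syndrome `a (mod n)` and sum `b` (shifted mod 4). -/
def Wfull (n ℓ : ℕ) (T : ℤ) (a : ZMod n) (b α : ℤ) : Set (List ℤ) :=
  {x | x.length = ℓ ∧ IsQ x ∧ x.getLast? = some α ∧ (synTime x : ℤ) ≤ T ∧
       ((vtSyn (auxSeq x) : ℕ) : ZMod n) = a ∧ mods4 x.sum = b}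

lemma altSeq_concat (T : ℕ) : altSeq (T+1) = altSeq T ++ [mods4 ((T:ℤ)+1)] := by
  unfold altSeq mods4
  rw [List.range_succ, List.map_append]
  congr 1
  simp only [List.map_cons, List.map_nil]
  congr 1
  push_cast
  omega

lemma altSeq_sublist {s t : ℕ} (h : s ≤ t) : (altSeq s).Sublist (altSeq t) :=
  (List.range_sublist.2 h).map _

lemma exists_sublist (x : List ℤ) (hx : IsQ x) : x.Sublist (altSeq (4 * x.length)) := by
  induction x using List.reverseRecOn with
  | nil => simp
  | append_singleton y α ih =>
    have hy : IsQ y := fun z hz => hx z (by simp [hz])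
    have hα : 1 ≤ α ∧ α ≤ 4 := hx α (by simp)
    have hih := ih hy
    set m := y.length with hm
    have h1 : 4 * m + α.toNat = (4 * m + α.toNat - 1) + 1 := by omega
    have h2 : altSeq (4 * m + α.toNat) = altSeq (4 * m + α.toNat - 1) ++ [α] := by
      rw [h1, altSeq_concat]
      congr 2
      unfold mods4
      push_cast
      omega
    have h3 : (y ++ [α]).Sublist (altSeq (4 * m + α.toNat)) := by
      rw [h2]
      exact (hih.trans (altSeq_sublist (by omega))).append (List.Sublist.refl _)
    refine h3.trans (altSeq_sublist ?_)
    simp only [List.length_append, List.length_singleton]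
    omega

lemma synTime_mem {x : List ℤ} (hx : IsQ x) : x.Sublist (altSeq (synTime x)) := by
  have h : synTime x ∈ {T : ℕ | x.Sublist (altSeq T)} :=
    Nat.sInf_mem ⟨4 * x.length, exists_sublist x hx⟩
  exact h

lemma synTime_le_iff {x : List ℤ} (hx : IsQ x) (T : ℕ) :
    synTime x ≤ T ↔ x.Sublist (altSeq T) := by
  constructor
  · intro h; exact (synTime_mem hx).trans (altSeq_sublist h)
  · intro h; exact Nat.sInf_le h

lemma synTime_pos {x : List ℤ} (hx : IsQ x) (hne : x ≠ []) : 1 ≤ synTime x := by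
  by_contra h
  have h0 : synTime x = 0 := by omega
  have := synTime_mem hx
  rw [h0] at this
  simp [altSeq] at this
  exact hne this

lemma sublist_concat_elim {x l : List ℤ} {a : ℤ} (h : x.Sublist (l ++ [a])) :
    x.Sublist l ∨ ∃ y, x = y ++ [a] ∧ y.Sublist l := by
  rw [List.sublist_append_iff] at h
  obtain ⟨l₁, l₂, rfl, h₁, h₂⟩ := h
  rcases List.sublist_singleton.mp h₂ with rfl | rfl
  · left; simpa using h₁
  · right; exact ⟨l₁, rfl, h₁⟩

lemma last_decomp {x : List ℤ} (hx : IsQ x) (hne : x ≠ []) :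
    ∃ y, x = y ++ [mods4 (synTime x)] ∧ y.Sublist (altSeq (synTime x - 1)) := by
  have hs1 : 1 ≤ synTime x := synTime_pos hx hne
  have hmem := synTime_mem hx
  have heq : synTime x = (synTime x - 1) + 1 := by omega
  have h2 : altSeq (synTime x) = altSeq (synTime x - 1) ++ [mods4 (synTime x)] := by
    conv_lhs => rw [heq]
    rw [altSeq_concat]
    congr 3
    push_cast
    omega
  rw [h2] at hmem
  rcases sublist_concat_elim hmem with h | h
  · exfalso
    have : synTime x ≤ synTime x - 1 := Nat.sInf_le h
    omega
  · exact h

lemma mods4_emod (a : ℤ) : mods4 a % 4 = a % 4 := by unfold mods4; omega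

lemma key {y : List ℤ} {α i : ℤ} (hy : IsQ y) (hne : y ≠ []) (hlast : y.getLast? = some i)
    (hα : 1 ≤ α ∧ α ≤ 4) :
    (synTime (y ++ [α]) : ℤ) = (synTime y : ℤ) + mods4 (α - i) := by
  have hi4 : 1 ≤ i ∧ i ≤ 4 := hy i (List.mem_of_mem_getLast? (by simp [hlast]))
  set s := synTime y with hs
  have hmem := synTime_mem hy
  have hs1 : 1 ≤ s := synTime_pos hy hne
  have hieq : i = mods4 s := by
    obtain ⟨y', hy', _⟩ := last_decomp hy hne
    rw [hy', List.getLast?_concat] at hlast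
    exact (Option.some_injective _ hlast).symm
  have hsmod : (s : ℤ) % 4 = i % 4 := by rw [hieq, mods4_emod]
  have hcmod : mods4 (α - i) % 4 = (α - i) % 4 := mods4_emod _
  have hc14 : 1 ≤ mods4 (α - i) ∧ mods4 (α - i) ≤ 4 := by unfold mods4; omega
  set c := (mods4 (α - i)).toNat with hcdef
  have hcz : (c : ℤ) = mods4 (α - i) := Int.toNat_of_nonneg (by omega)
  have hxq : IsQ (y ++ [α]) := by
    intro z hz
    rcases List.mem_append.mp hz with h | h
    · exact hy z h
    · simp at h; subst h; exact hα
  -- upper bound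
  have hup : (y ++ [α]).Sublist (altSeq (s + c)) := by
    have h1 : s + c = (s + c - 1) + 1 := by omega
    have h2 : altSeq (s + c) = altSeq (s + c - 1) ++ [α] := by
      rw [h1, altSeq_concat]
      congr 2
      unfold mods4 at *
      push_cast
      omega
    rw [h2]
    exact (hmem.trans (altSeq_sublist (by omega))).append (List.Sublist.refl _)
  have hub : synTime (y ++ [α]) ≤ s + c := Nat.sInf_le hup
  -- lower bound
  set t := synTime (y ++ [α]) with ht
  obtain ⟨z, hz, hzsub⟩ := last_decomp hxq (by simp)
  have hαt : mods4 (t : ℤ) = α := by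
    have := hz ▸ (List.getLast?_concat (l := y) (a := α))
    rw [List.getLast?_concat] at this
    exact Option.some_injective _ this
  have hyz : y = z := by
    rw [hαt] at hz
    exact List.append_cancel_right hz
  have hsle : s ≤ t - 1 := by
    rw [hs, synTime_le_iff hy]
    rw [hyz]
    exact hzsub
  have ht1 : 1 ≤ t := synTime_pos hxq (by simp)
  have htmod : (t : ℤ) % 4 = α % 4 := by rw [← hαt, mods4_emod]
  omega

lemma auxSeq_concat : ∀ (y : List ℤ) {i : ℤ} (α : ℤ), y.getLast? = some i →
    auxSeq (y ++ [α]) = auxSeq y ++ [if i ≤ α then 1 else 0]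
  | [], i, α, h => by simp at h
  | [b], i, α, h => by
    simp at h; subst h; simp [auxSeq]
  | b :: c :: l, i, α, h => by
    have h' : (c :: l).getLast? = some i := by rwa [List.getLast?_cons_cons] at h
    have ih := auxSeq_concat (c :: l) α h'
    show auxSeq (b :: c :: (l ++ [α])) = _
    have e1 : auxSeq (b :: c :: (l ++ [α]))
        = (if b ≤ c then 1 else 0) :: auxSeq (c :: (l ++ [α])) := rfl
    have e2 : auxSeq (b :: c :: l) = (if b ≤ c then 1 else 0) :: auxSeq (c :: l) := rfl
    rw [e1, show (c : ℤ) :: (l ++ [α]) = (c :: l) ++ [α] from rfl, ih, e2]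
    simp

lemma auxSeq_length (x : List ℤ) : (auxSeq x).length = x.length - 1 := by
  simp [auxSeq]

lemma vtSyn_concat (w : List ℕ) (u : ℕ) :
    vtSyn (w ++ [u]) = vtSyn w + (w.length + 1) * u := by
  unfold vtSyn
  rw [List.length_append, List.length_singleton, Finset.sum_range_succ]
  congr 1
  · exact Finset.sum_congr rfl fun i hi =>
      congrArg _ (List.getD_append _ _ _ _ (List.mem_range.mp hi))
  · congr 1
    simp [List.getD_append_right]

lemma zmod_helper {n : ℕ} (v m : ℕ) (a : ZMod n) (c : Prop) [Decidable c] :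
    ((v + m * (if c then 1 else 0) : ℕ) : ZMod n) = a ↔
      (v : ZMod n) = a - (if c then (m : ZMod n) else 0) := by
  split_ifs with h
  · rw [mul_one]
    push_cast
    exact (eq_sub_iff_add_eq).symm
  · rw [mul_zero, add_zero, sub_zero]

lemma sum_helper {s α b : ℤ} (hb : 1 ≤ b ∧ b ≤ 4) : mods4 (s + α) = b ↔ mods4 s = mods4 (b - α) := by
  unfold mods4
  omega

lemma concat_mem_Wfull_iff {n ℓ : ℕ} (hℓ2 : 2 ≤ ℓ) {T : ℤ} {a : ZMod n} {b α i : ℤ}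
    (hb : 1 ≤ b ∧ b ≤ 4) (hα : 1 ≤ α ∧ α ≤ 4) {y : List ℤ} (hyq : IsQ y) (hylast : y.getLast? = some i) :
    y ++ [α] ∈ Wfull n ℓ T a b α ↔
      y ∈ Wfull n (ℓ - 1) (T - mods4 (α - i))
        (a - (if i ≤ α then ((ℓ - 1 : ℕ) : ZMod n) else 0)) (mods4 (b - α)) i := by
  have hyne : y ≠ [] := by rintro rfl; simp at hylast
  have hkey := key hyq hyne hylast hα
  have hauxc := auxSeq_concat y α hylast
  have hauxlen := auxSeq_length y
  simp only [Wfull, Set.mem_setOf_eq]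
  constructor
  · rintro ⟨hlen, hq, -, hsyn, hvt, hsum⟩
    simp only [List.length_append, List.length_singleton] at hlen
    have hylen : y.length = ℓ - 1 := by omega
    refine ⟨hylen, hyq, hylast, by omega, ?_, ?_⟩
    · rw [hauxc, vtSyn_concat] at hvt
      have hw : (auxSeq y).length + 1 = ℓ - 1 := by omega
      rw [hw] at hvt
      exact (zmod_helper _ _ _ _).mp hvt
    · rw [List.sum_append, List.sum_singleton] at hsum
      exact (sum_helper hb).mp hsum
  · rintro ⟨hylen, -, -, hsyn, hvt, hsum⟩
    have hq : IsQ (y ++ [α]) := by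
      intro z hz
      rcases List.mem_append.mp hz with h | h
      · exact hyq z h
      · simp at h; subst h; exact hα
    refine ⟨by simp; omega, hq, List.getLast?_concat, by omega, ?_, ?_⟩
    · rw [hauxc, vtSyn_concat]
      have hw : (auxSeq y).length + 1 = ℓ - 1 := by omega
      rw [hw]
      exact (zmod_helper _ _ _ _).mpr hvt
    · rw [List.sum_append, List.sum_singleton]
      exact (sum_helper hb).mpr hsum

/-- the recursion expressing `W_n(ℓ,T,a,b,α)` as the disjoint union,
over `i = 1,2,3,4`, of `W_n(ℓ-1, T - c_i, a - 𝟙[α ≥ i](ℓ-1), (b-α) mod* 4, i) ∘ α`,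
where `c_i = (α - i) mod* 4`. -/
theorem Wfull_recursion (n : ℕ) (hn : 0 < n) (ℓ : ℕ) (hℓ2 : 2 ≤ ℓ) (hℓn : ℓ ≤ n)
    (T : ℤ) (a : ZMod n) (b α : ℤ)
    (hb : 1 ≤ b ∧ b ≤ 4) (hα : 1 ≤ α ∧ α ≤ 4) :
    (Wfull n ℓ T a b α =
      ⋃ i ∈ Finset.Icc (1 : ℤ) 4,
        (fun x => x ++ [α]) ''
          Wfull n (ℓ - 1) (T - mods4 (α - i))
            (a - (if i ≤ α then ((ℓ - 1 : ℕ) : ZMod n) else 0)) (mods4 (b - α)) i) ∧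
    (∀ i ∈ Finset.Icc (1 : ℤ) 4, ∀ i' ∈ Finset.Icc (1 : ℤ) 4, i ≠ i' →
      Disjoint
        ((fun x => x ++ [α]) ''
          Wfull n (ℓ - 1) (T - mods4 (α - i))
            (a - (if i ≤ α then ((ℓ - 1 : ℕ) : ZMod n) else 0)) (mods4 (b - α)) i)
        ((fun x => x ++ [α]) ''
          Wfull n (ℓ - 1) (T - mods4 (α - i'))
            (a - (if i' ≤ α then ((ℓ - 1 : ℕ) : ZMod n) else 0)) (mods4 (b - α)) i')) := by
  constructor
  · ext x
    simp only [Set.mem_iUnion, Finset.mem_Icc, Set.mem_image, exists_prop]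
    constructor
    · intro hx
      obtain ⟨hlen, hq, hlast, hsyn, hvt, hsum⟩ := hx
      have hne : x ≠ [] := by rintro rfl; simp at hlen; omega
      have hxeq : x = x.dropLast ++ [α] := by
        have h1 := List.dropLast_append_getLast hne
        have h2 : x.getLast hne = α := by
          rw [List.getLast?_eq_getLast hne] at hlast
          exact Option.some_injective _ hlast
        rw [h2] at h1
        exact h1.symm
      set y := x.dropLast with hy
      have hyne : y ≠ [] := by
        intro h
        rw [hxeq, h] at hlen
        simp at hlen
        omega
      set i := y.getLast hyne with hi
      have hylast : y.getLast? = some i := List.getLast?_eq_getLast hyne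
      have hyq : IsQ y := fun z hz => hq z (List.dropLast_sublist x |>.subset hz)
      have hi14 : 1 ≤ i ∧ i ≤ 4 := hyq i (List.getLast_mem hyne)
      refine ⟨i, hi14, y, ?_, hxeq.symm⟩
      rw [← concat_mem_Wfull_iff hℓ2 hb hα hyq hylast, ← hxeq]
      exact ⟨hlen, hq, hlast, hsyn, hvt, hsum⟩
    · rintro ⟨i, hi14, y, hmem, rfl⟩
      have hyq : IsQ y := hmem.2.1
      have hylast : y.getLast? = some i := hmem.2.2.1
      exact (concat_mem_Wfull_iff hℓ2 hb hα hyq hylast).mpr hmem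
  · intro i hi i' hi' hne
    rw [Set.disjoint_left]
    rintro z ⟨y, hy, rfl⟩ ⟨y', hy', heq⟩
    have : y' = y := List.append_cancel_right heq
    subst this
    exact hne (Option.some_injective _ (hy.2.2.1.symm.trans hy'.2.2.1))
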